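/- Let Y be a real random variable on a probability space with CDF F(z) = P(Y ≤ z), and let Z be a real random variable independent of Y with law ν. Then for every measurable function G : ℝ → (0,1), the expected g-loss satisfies E[ℓ(1_{Y ≤ Z}, G(Z))] ≥ ∫ H(F(z)) dν(z), where the right-hand side is the value of the loss at the true CDF (i.e. the loss is minimized over all measurable (0,1)-valued functions by G = F). -/

import Mathlib

open MeasureTheory ProbabilityTheory

/-- Binary cross-entropy loss `ℓ(t, p) = −(t·log p + (1 − t)·log(1 − p))`. -/
noncomputable def bce (t p : ℝ) : ℝ := -(t * Real.log p + (1 - t) * Real.log (1 - p))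

/-- Binary entropy `H(a) = −(a·log a + (1 − a)·log(1 − a))` (`0·log 0 = 0` automatic). -/
noncomputable def binEntropy' (a : ℝ) : ℝ := -(a * Real.log a + (1 - a) * Real.log (1 - a))

lemma gibbs {a p : ℝ} (ha0 : 0 ≤ a) (ha1 : a ≤ 1) (hp0 : 0 < p) (hp1 : p < 1) :
    binEntropy' a ≤ a * (-Real.log p) + (1 - a) * (-Real.log (1 - p)) := by
  have h1p : (0:ℝ) < 1 - p := by linarith
  unfold binEntropy'
  rcases eq_or_lt_of_le ha0 with h0 | h0
  · simp [← h0]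
    nlinarith [Real.log_nonpos h1p.le (by linarith : 1 - p ≤ 1)]
  rcases eq_or_lt_of_le ha1 with h1 | h1
  · simp [h1]
    nlinarith [Real.log_nonpos hp0.le hp1.le]
  have h1a : (0:ℝ) < 1 - a := by linarith
  have k1 : Real.log p - Real.log a ≤ p / a - 1 := by
    rw [← Real.log_div hp0.ne' h0.ne']
    exact Real.log_le_sub_one_of_pos (div_pos hp0 h0)
  have k2 : Real.log (1 - p) - Real.log (1 - a) ≤ (1 - p) / (1 - a) - 1 := by
    rw [← Real.log_div h1p.ne' h1a.ne']
    exact Real.log_le_sub_one_of_pos (div_pos h1p h1a)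
  have m1 : a * (Real.log p - Real.log a) ≤ p - a := by
    have := mul_le_mul_of_nonneg_left k1 h0.le
    calc a * (Real.log p - Real.log a) ≤ a * (p / a - 1) := this
      _ = p - a := by field_simp
  have m2 : (1 - a) * (Real.log (1 - p) - Real.log (1 - a)) ≤ (1 - p) - (1 - a) := by
    have := mul_le_mul_of_nonneg_left k2 h1a.le
    calc (1 - a) * (Real.log (1 - p) - Real.log (1 - a)) ≤ (1 - a) * ((1 - p) / (1 - a) - 1) := this
      _ = (1 - p) - (1 - a) := by field_simp
  nlinarith

/-- Let `Y` be a real random variable with CDF `F(z) = P(Y ≤ z)`, and `Z` a real random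
variable independent of `Y` with law `ν = P.map Z`. Then for every measurable
`G : ℝ → (0,1)`, the expected g-loss satisfies
`E[ℓ(1_{Y ≤ Z}, G(Z))] ≥ ∫ H(F(z)) dν(z)` (expectations of these nonnegative quantities
are written as lower Lebesgue integrals). -/
theorem gloss_ge_entropy_of_cdf
    {Ω : Type*} [MeasurableSpace Ω] (P : Measure Ω) [IsProbabilityMeasure P]
    (Y Z : Ω → ℝ) (hY : Measurable Y) (hZ : Measurable Z)
    (hindep : IndepFun Y Z P)
    (G : ℝ → ℝ) (hG : Measurable G) (hG01 : ∀ z, G z ∈ Set.Ioo (0 : ℝ) 1) :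
    ∫⁻ ω, ENNReal.ofReal (bce (if Y ω ≤ Z ω then 1 else 0) (G (Z ω))) ∂P
      ≥ ∫⁻ z, ENNReal.ofReal (binEntropy' (cdf (P.map Y) z)) ∂(P.map Z) := by
  set μ := P.map Y with hμ
  set ν := P.map Z with hν
  haveI : IsProbabilityMeasure μ := Measure.isProbabilityMeasure_map hY.aemeasurable
  haveI : IsProbabilityMeasure ν := Measure.isProbabilityMeasure_map hZ.aemeasurable
  set f : ℝ × ℝ → ENNReal :=
    fun q => ENNReal.ofReal (bce (if q.1 ≤ q.2 then 1 else 0) (G q.2)) with hf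
  have hfm : Measurable f := by
    apply Measurable.ennreal_ofReal
    simp only [bce]
    apply Measurable.neg
    apply Measurable.add
    · exact ((measurable_const.ite (measurableSet_le measurable_fst measurable_snd)
        measurable_const).mul ((Real.measurable_log.comp hG).comp measurable_snd))
    · apply Measurable.mul
      · exact measurable_const.sub (measurable_const.ite
          (measurableSet_le measurable_fst measurable_snd) measurable_const)
      · exact (Real.measurable_log.comp ((measurable_const.sub hG))).comp measurable_snd
  have hmap : P.map (fun ω => (Y ω, Z ω)) = μ.prod ν :=
    (indepFun_iff_map_prod_eq_prod_map_map hY.aemeasurable hZ.aemeasurable).mp hindep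
  have hL : ∫⁻ ω, ENNReal.ofReal (bce (if Y ω ≤ Z ω then 1 else 0) (G (Z ω))) ∂P
      = ∫⁻ z, ∫⁻ y, f (y, z) ∂μ ∂ν := by
    rw [← lintegral_map hfm (hY.prodMk hZ), hmap, lintegral_prod_symm _ hfm.aemeasurable]
  rw [hL]
  refine lintegral_mono fun z => ?_
  set p := G z with hp
  obtain ⟨hp0, hp1⟩ := hG01 z
  have hFle : cdf μ z ≤ 1 := cdf_le_one μ z
  have hF0 : 0 ≤ cdf μ z := cdf_nonneg μ z
  have hinner : ∫⁻ y, f (y, z) ∂μ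
      = ENNReal.ofReal (-Real.log p) * μ (Set.Iic z)
        + ENNReal.ofReal (-Real.log (1 - p)) * μ (Set.Iic z)ᶜ := by
    rw [← lintegral_add_compl (fun y => f (y, z)) measurableSet_Iic]
    congr 1
    · rw [setLIntegral_congr_fun measurableSet_Iic
        (fun y hy => ?_), setLIntegral_const]
      simp only [hf, Set.mem_Iic.mp hy, if_pos, bce, hp]
      norm_num
    · rw [setLIntegral_congr_fun measurableSet_Iic.compl
        (fun y hy => ?_), setLIntegral_const]
      have : ¬ y ≤ z := Set.mem_compl_iff _ _ |>.mp hy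
      simp only [hf, this, if_false, bce, hp]
      norm_num
  rw [hinner]
  have hIic : μ (Set.Iic z) = ENNReal.ofReal (cdf μ z) := (ofReal_cdf μ z).symm
  have hcompl : μ (Set.Iic z)ᶜ = ENNReal.ofReal (1 - cdf μ z) := by
    rw [measure_compl measurableSet_Iic (measure_ne_top μ _), measure_univ, hIic,
      ENNReal.ofReal_sub _ hF0, ENNReal.ofReal_one]
  have hlp : 0 ≤ -Real.log p := neg_nonneg.mpr (Real.log_nonpos hp0.le hp1.le)
  have hlq : 0 ≤ -Real.log (1 - p) :=
    neg_nonneg.mpr (Real.log_nonpos (by linarith) (by linarith))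
  rw [hIic, hcompl, ← ENNReal.ofReal_mul hlp, ← ENNReal.ofReal_mul hlq,
    ← ENNReal.ofReal_add (mul_nonneg hlp hF0) (mul_nonneg hlq (by linarith))]
  apply ENNReal.ofReal_le_ofReal
  have := gibbs hF0 hFle hp0 hp1
  nlinarith [this]
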